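/- Let G be a connected graph with a sign function σ : E(G) → ℤ/2ℤ defining a connected free double cover, and let {e₁, …, e_n} ⊆ E(G) be an FS_n-set: deleting all of e₁, …, e_n leaves exactly two connected components, both unbalanced, while deleting any proper subset of {e₁, …, e_n} leaves G connected. Then n ≤ b₁(G) − 1, where b₁(G) = |E(G)| − |V(G)| + 1. -/

import Mathlib

open scoped Classical

structure HGraph where
  V : Type
  H : Type
  [fintV : Fintype V]
  [fintH : Fintype H]
  [decV : DecidableEq V]
  [decH : DecidableEq H]
  root : H → V
  inv : H → H
  inv_inv : ∀ h, inv (inv h) = h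
  inv_ne : ∀ h, inv h ≠ h

attribute [instance] HGraph.fintV HGraph.fintH HGraph.decV HGraph.decH

namespace HGraph

variable (G : HGraph)

/-- The setoid on half-edges whose classes are the edges. -/
def edgeSetoid : Setoid G.H where
  r h h' := h' = h ∨ h' = G.inv h
  iseqv := by
    refine ⟨fun h => Or.inl rfl, ?_, ?_⟩
    · rintro a b (rfl | rfl)
      · exact Or.inl rfl
      · exact Or.inr (G.inv_inv a).symm
    · rintro a b c (rfl | rfl) hbc
      · exact hbc
      · rcases hbc with rfl | rfl
        · exact Or.inr rfl
        · exact Or.inl (G.inv_inv a)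

instance edgeDec : DecidableRel G.edgeSetoid.r := fun _ _ => instDecidableOr

/-- The edges of a graph: orbits of the involution on half-edges. -/
def Edge := Quotient G.edgeSetoid

instance : Fintype G.Edge := @Quotient.fintype _ _ G.edgeSetoid G.edgeDec
instance : DecidableEq G.Edge := @Quotient.decidableEq _ G.edgeSetoid G.edgeDec

/-- The edge underlying a half-edge. -/
def edge (h : G.H) : G.Edge := Quotient.mk G.edgeSetoid h

lemma edge_inv (h : G.H) : G.edge (G.inv h) = G.edge h :=
  Quotient.sound (Or.inr (G.inv_inv h).symm)

/-- The valence of a vertex: the number of half-edges rooted at it. -/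
def val (v : G.V) : ℕ := (Finset.univ.filter fun h => G.root h = v).card

/-- Two vertices are adjacent through an edge belonging to `S`. -/
def adjOn (S : Finset G.Edge) (v w : G.V) : Prop :=
  ∃ h, G.edge h ∈ S ∧ G.root h = v ∧ G.root (G.inv h) = w

/-- The spanning subgraph with edge set `S` is connected. -/
def ConnectedOn (S : Finset G.Edge) : Prop :=
  ∀ v w : G.V, Relation.ReflTransGen (G.adjOn S) v w

/-- The graph is connected. -/
def Connected : Prop := Nonempty G.V ∧ G.ConnectedOn Finset.univ

/-- Euler characteristic of a vertex, for a genus function `gV`. -/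
def chiZ (gV : G.V → ℤ) (v : G.V) : ℤ := 2 - 2 * gV v - G.val v

/-- The genus of a (connected) weighted graph. -/
def genusZ (gV : G.V → ℤ) : ℤ :=
  (Fintype.card G.Edge : ℤ) - Fintype.card G.V + 1 + ∑ v, gV v

/-- The number of connected components of the spanning subgraph with edge set `S`. -/
noncomputable def ncomp (S : Finset G.Edge) : ℕ :=
  Nat.card (Quotient (Relation.EqvGen.setoid (G.adjOn S)))

end HGraph

/-- A harmonic morphism of graphs: a graph morphism together with local degrees. -/
structure HarmonicTo (Gt G : HGraph) where
  fV : Gt.V → G.V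
  fH : Gt.H → G.H
  root_comm : ∀ h, G.root (fH h) = fV (Gt.root h)
  inv_comm : ∀ h, fH (Gt.inv h) = G.inv (fH h)
  dV : Gt.V → ℕ
  dH : Gt.H → ℕ
  dV_pos : ∀ v, 0 < dV v
  dH_pos : ∀ h, 0 < dH h
  dH_inv : ∀ h, dH (Gt.inv h) = dH h
  harm : ∀ (w : Gt.V) (h : G.H), G.root h = fV w →
    dV w = ∑ x ∈ Finset.univ.filter (fun x => Gt.root x = w ∧ fH x = h), dH x

namespace HarmonicTo

variable {Gt G : HGraph} (f : HarmonicTo Gt G)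

/-- The induced map on edges. -/
def fE : Gt.Edge → G.Edge :=
  Quotient.lift (fun h => G.edge (f.fH h)) (by
    rintro a b (rfl | rfl)
    · rfl
    · show G.edge (f.fH a) = G.edge (f.fH (Gt.inv a))
      rw [f.inv_comm]
      exact (G.edge_inv _).symm)

/-- The local degree of an edge. -/
def dE : Gt.Edge → ℕ :=
  Quotient.lift f.dH (by
    rintro a b (rfl | rfl)
    · rfl
    · exact (f.dH_inv a).symm)

/-- The ramification degree at a vertex of the source. -/
def Ram (gVt : Gt.V → ℤ) (gV : G.V → ℤ) (w : Gt.V) : ℤ :=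
  (f.dV w : ℤ) * G.chiZ gV (f.fV w) - Gt.chiZ gVt w

end HarmonicTo

namespace HGraph

/-- A cycle contained in a set of edges `S`: a closed walk with pairwise distinct edges and
pairwise distinct vertices, all of whose edges belong to `S`. -/
def IsCycleIn (G : HGraph) (S : Set G.Edge) {n : ℕ} (c : Fin (n + 1) → G.H) : Prop :=
  (∀ i, G.edge (c i) ∈ S) ∧
  (∀ i, G.root (G.inv (c i)) = G.root (c (i + 1))) ∧
  (Function.Injective fun i => G.edge (c i)) ∧
  (Function.Injective fun i => G.root (c i))

/-- A signed graph is unbalanced if it contains a cycle of odd total sign. -/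
def Unbal (G : HGraph) (σ : G.Edge → ZMod 2) : Prop :=
  ∃ (n : ℕ) (c : Fin (n + 1) → G.H),
    G.IsCycleIn Set.univ c ∧ (∑ i, σ (G.edge (c i))) = 1

/-- Every connected component of the graph obtained from `G` by deleting the edges in `F` is
unbalanced: every vertex can reach, through edges not in `F`, the base point of a cycle of odd
total sign avoiding `F`. -/
def DelUnbal (G : HGraph) (σ : G.Edge → ZMod 2) (F : Finset G.Edge) : Prop :=
  ∀ v : G.V, ∃ (n : ℕ) (c : Fin (n + 1) → G.H),
    G.IsCycleIn {e | e ∉ F} c ∧ (∑ i, σ (G.edge (c i))) = 1 ∧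
    Relation.ReflTransGen (G.adjOn Fᶜ) v (G.root (c 0))

/-- A Prym basis: a set `B` of `|V(G)|` edges such that every connected component of the
spanning subgraph `(V(G), B)` is unbalanced. -/
def PrymBasis (G : HGraph) (σ : G.Edge → ZMod 2) (B : Finset G.Edge) : Prop :=
  B.card = Fintype.card G.V ∧
  ∀ v : G.V, ∃ (n : ℕ) (c : Fin (n + 1) → G.H),
    G.IsCycleIn {e | e ∈ B} c ∧ (∑ i, σ (G.edge (c i))) = 1 ∧
    Relation.ReflTransGen (G.adjOn B) v (G.root (c 0))

/-- The free double cover associated to a signed graph. -/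
def cover (G : HGraph) (σ : G.Edge → ZMod 2) : HGraph where
  V := G.V × ZMod 2
  H := G.H × ZMod 2
  root p := (G.root p.1, p.2)
  inv p := (G.inv p.1, p.2 + σ (G.edge p.1))
  inv_inv := by
    intro p
    have h2 : ∀ a : ZMod 2, a + a = 0 := by decide
    ext
    · exact G.inv_inv p.1
    · show p.2 + σ (G.edge p.1) + σ (G.edge (G.inv p.1)) = p.2
      rw [G.edge_inv, add_assoc, h2, add_zero]
  inv_ne := by
    intro p hp
    exact G.inv_ne p.1 (congrArg Prod.fst hp)

end HGraph

namespace HGraph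

/-- An `FSₙ`-set of a connected signed graph: a set `S` of `n` edges whose deletion leaves
exactly two connected components, both unbalanced, while the deletion of any proper subset of
`S` leaves the graph connected. -/
def IsFSSet (G : HGraph) (σ : G.Edge → ZMod 2) (S : Finset G.Edge) : Prop :=
  G.ncomp Sᶜ = 2 ∧ G.DelUnbal σ S ∧ ∀ S' ⊆ S, S' ≠ S → G.ConnectedOn S'ᶜ

end HGraph

namespace HGraph

variable {G : HGraph}


lemma eqvGen_le {α : Type*} {R R' : α → α → Prop}
    (h : ∀ u v, R u v → Relation.EqvGen R' u v) :
    ∀ u v, Relation.EqvGen R u v → Relation.EqvGen R' u v := by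
  intro u v huv
  induction huv with
  | rel a b hab => exact h a b hab
  | refl a => exact Relation.EqvGen.refl a
  | symm a b _ ih => exact Relation.EqvGen.symm _ _ ih
  | trans a b c _ _ ih1 ih2 => exact Relation.EqvGen.trans _ _ _ ih1 ih2

lemma ncomp_le {T T' : Finset G.Edge}
    (h : ∀ u v, G.adjOn T u v → Relation.EqvGen (G.adjOn T') u v) :
    G.ncomp T' ≤ G.ncomp T := by
  have hsur : Function.Surjective
      (Quotient.lift
        (fun v => (Quotient.mk (Relation.EqvGen.setoid (G.adjOn T')) v))
        (fun a b hab => Quotient.sound (eqvGen_le h a b hab)) :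
        Quotient (Relation.EqvGen.setoid (G.adjOn T)) →
          Quotient (Relation.EqvGen.setoid (G.adjOn T'))) := by
    intro q
    obtain ⟨v, rfl⟩ := Quotient.exists_rep q
    exact ⟨Quotient.mk _ v, rfl⟩
  exact Nat.card_le_card_of_surjective _ hsur

lemma adjOn_mono {T T' : Finset G.Edge} (hTT : T ⊆ T') {u v : G.V}
    (h : G.adjOn T u v) : G.adjOn T' u v := by
  obtain ⟨x, hx, h1, h2⟩ := h
  exact ⟨x, hTT hx, h1, h2⟩

lemma ncomp_erase_le_succ (T : Finset G.Edge) (e : G.Edge) :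
    G.ncomp (T.erase e) ≤ G.ncomp T + 1 := by
  obtain ⟨h0, rfl⟩ : ∃ h0, G.edge h0 = e := ⟨e.out, Quotient.out_eq e⟩
  set a := G.root h0 with ha
  set b := G.root (G.inv h0) with hb
  set R' := Relation.EqvGen (G.adjOn (T.erase (G.edge h0))) with hR'
  have key : ∀ u v, Relation.EqvGen (G.adjOn T) u v →
      (R' u v ∨ ((R' u a ∨ R' u b) ∧ (R' v a ∨ R' v b))) := by
    intro u v huv
    induction huv with
    | rel x y hxy =>
        obtain ⟨h, hmem, hx, hy⟩ := hxy
        by_cases hhe : G.edge h = G.edge h0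
        · right
          rcases Quotient.exact hhe with h1 | h1
          · subst hx; subst hy; rw [← h1]
            exact ⟨Or.inl (Relation.EqvGen.refl _), Or.inr (Relation.EqvGen.refl _)⟩
          · subst hx; subst hy
            constructor
            · right; rw [hb, h1, G.inv_inv]; exact Relation.EqvGen.refl _
            · left; rw [ha, h1]; exact Relation.EqvGen.refl _
        · left
          exact Relation.EqvGen.rel _ _ ⟨h, Finset.mem_erase.mpr ⟨hhe, hmem⟩, hx, hy⟩
    | refl x => exact Or.inl (Relation.EqvGen.refl x)
    | symm x y _ ih =>
        rcases ih with h1 | ⟨h1, h2⟩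
        · exact Or.inl (Relation.EqvGen.symm _ _ h1)
        · exact Or.inr ⟨h2, h1⟩
    | trans x y z _ _ ih1 ih2 =>
        rcases ih1 with h1 | ⟨h1, h2⟩
        · rcases ih2 with h3 | ⟨h3, h4⟩
          · exact Or.inl (Relation.EqvGen.trans _ _ _ h1 h3)
          · refine Or.inr ⟨?_, h4⟩
            rcases h3 with h3 | h3
            · exact Or.inl (Relation.EqvGen.trans _ _ _ h1 h3)
            · exact Or.inr (Relation.EqvGen.trans _ _ _ h1 h3)
        · rcases ih2 with h3 | ⟨h3, h4⟩
          · refine Or.inr ⟨h1, ?_⟩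
            rcases h2 with h2 | h2
            · exact Or.inl (Relation.EqvGen.trans _ _ _ (Relation.EqvGen.symm _ _ h3) h2)
            · exact Or.inr (Relation.EqvGen.trans _ _ _ (Relation.EqvGen.symm _ _ h3) h2)
          · exact Or.inr ⟨h1, h4⟩
  -- injection into Option
  have herase : ∀ u v, G.adjOn (T.erase (G.edge h0)) u v →
      Relation.EqvGen (G.adjOn T) u v := fun u v h =>
    Relation.EqvGen.rel _ _ (adjOn_mono (Finset.erase_subset _ _) h)
  set f : Quotient (Relation.EqvGen.setoid (G.adjOn (T.erase (G.edge h0)))) →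
      Option (Quotient (Relation.EqvGen.setoid (G.adjOn T))) :=
    Quotient.lift (fun v => if R' v a then (none : Option _) else
      some (Quotient.mk (Relation.EqvGen.setoid (G.adjOn T)) v))
      (by
        intro u v huv
        have h1 : R' u a ↔ R' v a :=
          ⟨fun h => Relation.EqvGen.trans _ _ _ (Relation.EqvGen.symm _ _ huv) h,
           fun h => Relation.EqvGen.trans _ _ _ huv h⟩
        by_cases hu : R' u a
        · simp [hu, h1.mp hu]
        · simp only [hu, if_neg, h1.not.mp hu, if_neg (h1.not.mp hu)]
          exact congrArg some (Quotient.sound (eqvGen_le herase u v huv))) with hf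
  have hinj : Function.Injective f := by
    intro x y hxy
    obtain ⟨u, rfl⟩ := Quotient.exists_rep x
    obtain ⟨v, rfl⟩ := Quotient.exists_rep y
    by_cases hu : R' u a <;> by_cases hv : R' v a
    · exact Quotient.sound (Relation.EqvGen.trans _ _ _ hu (Relation.EqvGen.symm _ _ hv))
    · exfalso; simp [hf, hu, hv] at hxy
    · exfalso; simp [hf, hu, hv] at hxy
    · simp only [hf, Quotient.lift_mk, if_neg hu, if_neg hv, Option.some.injEq] at hxy
      have := Quotient.exact hxy
      rcases key u v this with h1 | ⟨h1, h2⟩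
      · exact Quotient.sound h1
      · rcases h1 with h1 | h1
        · exact absurd h1 hu
        · rcases h2 with h2 | h2
          · exact absurd h2 hv
          · exact Quotient.sound (Relation.EqvGen.trans _ _ _ h1 (Relation.EqvGen.symm _ _ h2))
  calc G.ncomp (T.erase (G.edge h0))
      ≤ Nat.card (Option (Quotient (Relation.EqvGen.setoid (G.adjOn T)))) :=
        Nat.card_le_card_of_injective f hinj
    _ = G.ncomp T + 1 := by simp [ncomp, Nat.card_eq_fintype_card]

lemma ncomp_empty : G.ncomp (∅ : Finset G.Edge) = Fintype.card G.V := by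
  have : ∀ u v : G.V, Relation.EqvGen (G.adjOn (∅ : Finset G.Edge)) u v → u = v := by
    intro u v h
    induction h with
    | rel a b hab => exact absurd hab.choose_spec.1 (by simp)
    | refl a => rfl
    | symm a b _ ih => exact ih.symm
    | trans a b c _ _ ih1 ih2 => exact ih1.trans ih2
  have hbij : Function.Bijective
      (Quotient.mk (Relation.EqvGen.setoid (G.adjOn (∅ : Finset G.Edge)))) := by
    constructor
    · intro u v huv
      exact this u v (Quotient.exact huv)
    · intro q; exact Quotient.exists_rep q
  rw [ncomp, ← Nat.card_eq_fintype_card]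
  exact (Nat.card_eq_of_bijective _ hbij).symm

lemma card_le_ncomp_add (T : Finset G.Edge) :
    Fintype.card G.V ≤ G.ncomp T + T.card := by
  induction T using Finset.induction_on with
  | empty => simp [ncomp_empty]
  | @insert e T he ih =>
      have h1 : G.ncomp T ≤ G.ncomp (insert e T) + 1 := by
        have := ncomp_erase_le_succ (G := G) (insert e T) e
        rwa [Finset.erase_insert he] at this
      rw [Finset.card_insert_of_notMem he]
      omega

open Fin.NatCast in
lemma cyc_equiv {T : Finset G.Edge} {n : ℕ} {c : Fin (n+1) → G.H}
    (hmem : ∀ i, G.edge (c i) ∈ T)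
    (hcons : ∀ i, G.root (G.inv (c i)) = G.root (c (i+1))) (i j : Fin (n+1)) :
    Relation.EqvGen (G.adjOn T) (G.root (c i)) (G.root (c j)) := by
  have key : ∀ (k : ℕ) (i : Fin (n+1)),
      Relation.EqvGen (G.adjOn T) (G.root (c i)) (G.root (c (i + (k : Fin (n+1))))) := by
    intro k
    induction k with
    | zero => intro i; simpa using Relation.EqvGen.refl (G.root (c i))
    | succ k ih =>
        intro i
        have hcast : ((k+1 : ℕ) : Fin (n+1)) = (k : Fin (n+1)) + 1 := by push_cast; ring
        rw [hcast, ← add_assoc]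
        exact Relation.EqvGen.trans _ _ _ (ih i)
          (Relation.EqvGen.rel _ _ ⟨c (i + (k : Fin (n+1))), hmem _, rfl, hcons _⟩)
  have := key (j - i).val i
  rwa [Fin.cast_val_eq_self, add_comm, sub_add_cancel] at this

open Fin.NatCast in
lemma cyc_detour {T : Finset G.Edge} {n : ℕ} {c : Fin (n+1) → G.H}
    (hmem : ∀ i, G.edge (c i) ∈ T)
    (hcons : ∀ i, G.root (G.inv (c i)) = G.root (c (i+1)))
    (hinj : Function.Injective fun i => G.edge (c i))
    {u v : G.V} (huv : G.adjOn T u v) :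
    Relation.EqvGen (G.adjOn (T.erase (G.edge (c 0)))) u v := by
  obtain ⟨h, hm, hu, hv⟩ := huv
  by_cases hhe : G.edge h = G.edge (c 0)
  · have main : Relation.EqvGen (G.adjOn (T.erase (G.edge (c 0))))
        (G.root (c 1)) (G.root (c 0)) := by
      have key : ∀ k : ℕ, k ≤ n →
          Relation.EqvGen (G.adjOn (T.erase (G.edge (c 0))))
            (G.root (c 1)) (G.root (c (1 + (k : Fin (n+1))))) := by
        intro k
        induction k with
        | zero => intro _; simpa using Relation.EqvGen.refl (G.root (c 1))
        | succ k ih =>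
            intro hk
            have hne : (1 + (k : Fin (n+1))) ≠ 0 := by
              have : (1 + (k : Fin (n+1))) = ((k+1 : ℕ) : Fin (n+1)) := by push_cast; exact add_comm _ _
              rw [this, Ne, Fin.natCast_eq_zero]
              intro hdvd
              have := Nat.le_of_dvd (by omega) hdvd
              omega
            have hstep : G.adjOn (T.erase (G.edge (c 0)))
                (G.root (c (1 + (k : Fin (n+1))))) (G.root (c (1 + (k : Fin (n+1)) + 1))) := by
              refine ⟨c (1 + (k : Fin (n+1))), ?_, rfl, hcons _⟩
              refine Finset.mem_erase.mpr ⟨?_, hmem _⟩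
              intro hcon
              exact hne (hinj hcon)
            have hcast : ((k+1 : ℕ) : Fin (n+1)) = (k : Fin (n+1)) + 1 := by push_cast; ring
            rw [hcast, ← add_assoc]
            exact Relation.EqvGen.trans _ _ _ (ih (by omega)) (Relation.EqvGen.rel _ _ hstep)
      have := key n le_rfl
      have hzero : (1 + (n : Fin (n+1))) = 0 := by
        have : (1 + (n : Fin (n+1))) = ((n+1 : ℕ) : Fin (n+1)) := by push_cast; exact add_comm _ _
        rw [this, Fin.natCast_self]
      rwa [hzero] at this
    rcases Quotient.exact hhe with h1 | h1
    · -- c 0 = h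
      subst hu; subst hv; rw [← h1]
      have h01 : G.root (G.inv (c 0)) = G.root (c 1) := by
        have := hcons 0; rwa [zero_add] at this
      rw [h01]
      exact Relation.EqvGen.symm _ _ main
    · -- c 0 = inv h
      subst hu; subst hv
      have hh : h = G.inv (c 0) := by rw [h1, G.inv_inv]
      rw [hh, G.inv_inv, hcons 0, zero_add]
      exact main
  · exact Relation.EqvGen.rel _ _ ⟨h, Finset.mem_erase.mpr ⟨hhe, hm⟩, hu, hv⟩

lemma rtg_eqvGen {α : Type*} {R : α → α → Prop} {u v : α}
    (h : Relation.ReflTransGen R u v) : Relation.EqvGen R u v := by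
  induction h with
  | refl => exact Relation.EqvGen.refl u
  | tail _ hbc ih => exact Relation.EqvGen.trans _ _ _ ih (Relation.EqvGen.rel _ _ hbc)

end HGraph

/-- **Statement 18.** If `{e₁, …, eₙ}` is an `FSₙ`-set of a connected signed graph `(G, σ)`
whose associated free double cover is connected, then `n ≤ b₁(G) − 1`, where
`b₁(G) = |E(G)| − |V(G)| + 1`. -/
theorem FS_set_size_bound (G : HGraph) (σ : G.Edge → ZMod 2)
    (hconn : G.Connected) (hcov : (G.cover σ).Connected)
    (S : Finset G.Edge) (n : ℕ) (hcard : S.card = n) (hFS : G.IsFSSet σ S) :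
    (n : ℤ) ≤ ((Fintype.card G.Edge : ℤ) - Fintype.card G.V + 1) - 1 := by
  obtain ⟨h2, hdel, -⟩ := hFS
  have hex : ∃ u w : G.V, ¬ Relation.EqvGen (G.adjOn Sᶜ) u w := by
    by_contra hall
    push_neg at hall
    have hsub : Subsingleton (Quotient (Relation.EqvGen.setoid (G.adjOn Sᶜ))) := ⟨by
      intro x y
      obtain ⟨u, rfl⟩ := Quotient.exists_rep x
      obtain ⟨w, rfl⟩ := Quotient.exists_rep y
      exact Quotient.sound (hall u w)⟩
    have hle : G.ncomp Sᶜ ≤ 1 := by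
      have : Fintype (Quotient (Relation.EqvGen.setoid (G.adjOn Sᶜ))) := Fintype.ofFinite _
      rw [HGraph.ncomp, Nat.card_eq_fintype_card]
      exact Fintype.card_le_one_iff_subsingleton.mpr hsub
    omega
  obtain ⟨v, w, hvw⟩ := hex
  obtain ⟨n1, c1, ⟨hm1, hc1, hinj1, -⟩, -, hr1⟩ := hdel v
  obtain ⟨n2, c2, ⟨hm2, hc2, hinj2, -⟩, -, hr2⟩ := hdel w
  have hm1' : ∀ i, G.edge (c1 i) ∈ Sᶜ := fun i => Finset.mem_compl.mpr (hm1 i)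
  have hm2' : ∀ i, G.edge (c2 i) ∈ Sᶜ := fun i => Finset.mem_compl.mpr (hm2 i)
  have hrv : Relation.EqvGen (G.adjOn Sᶜ) v (G.root (c1 0)) := HGraph.rtg_eqvGen hr1
  have hrw : Relation.EqvGen (G.adjOn Sᶜ) w (G.root (c2 0)) := HGraph.rtg_eqvGen hr2
  have hdiff : ∀ j, G.edge (c2 j) ≠ G.edge (c1 0) := by
    intro j hj
    apply hvw
    have hj2 : Relation.EqvGen (G.adjOn Sᶜ) (G.root (c2 j)) (G.root (c1 0)) := by
      rcases Quotient.exact hj with h1 | h1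
      · rw [h1]; exact Relation.EqvGen.refl _
      · rw [h1, hc2 j]
        exact HGraph.cyc_equiv hm2' hc2 j (j + 1)
    exact Relation.EqvGen.trans _ _ _ hrv
      (Relation.EqvGen.trans _ _ _ (Relation.EqvGen.symm _ _ hj2)
        (Relation.EqvGen.trans _ _ _ (HGraph.cyc_equiv hm2' hc2 j 0)
          (Relation.EqvGen.symm _ _ hrw)))
  have he1 : G.edge (c1 0) ∈ Sᶜ := hm1' 0
  have he2 : G.edge (c2 0) ∈ Sᶜ.erase (G.edge (c1 0)) :=
    Finset.mem_erase.mpr ⟨hdiff 0, hm2' 0⟩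
  have hstep1 : G.ncomp (Sᶜ.erase (G.edge (c1 0))) ≤ G.ncomp Sᶜ :=
    HGraph.ncomp_le (fun u v huv => HGraph.cyc_detour hm1' hc1 hinj1 huv)
  have hm2'' : ∀ i, G.edge (c2 i) ∈ Sᶜ.erase (G.edge (c1 0)) :=
    fun i => Finset.mem_erase.mpr ⟨hdiff i, hm2' i⟩
  have hstep2 : G.ncomp ((Sᶜ.erase (G.edge (c1 0))).erase (G.edge (c2 0))) ≤
      G.ncomp (Sᶜ.erase (G.edge (c1 0))) :=
    HGraph.ncomp_le (fun u v huv => HGraph.cyc_detour hm2'' hc2 hinj2 huv)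
  have hcount :=
    HGraph.card_le_ncomp_add (G := G) ((Sᶜ.erase (G.edge (c1 0))).erase (G.edge (c2 0)))
  have hcards : ((Sᶜ.erase (G.edge (c1 0))).erase (G.edge (c2 0))).card =
      Sᶜ.card - 1 - 1 := by
    rw [Finset.card_erase_of_mem he2, Finset.card_erase_of_mem he1]
  have hcompl : Sᶜ.card = Fintype.card G.Edge - S.card := by
    rw [Finset.card_compl]
  have hge2 : 2 ≤ Sᶜ.card := by
    have h1 := Finset.card_erase_of_mem he1
    have hpos : 0 < (Sᶜ.erase (G.edge (c1 0))).card := Finset.card_pos.mpr ⟨_, he2⟩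
    omega
  have hSle : S.card ≤ Fintype.card G.Edge := by
    rw [← Finset.card_univ]
    exact Finset.card_le_card (Finset.subset_univ S)
  have hkey : Fintype.card G.V + n ≤ Fintype.card G.Edge := by omega
  omega
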